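/- Let d ≥ 1 and λ ∈ ℂ with Im λ ≠ 0. The only tempered distribution u on ℝ^{1+d} satisfying □u = λu in the sense of distributions is u = 0. -/

import Mathlib

open MeasureTheory SchwartzMap Complex
open scoped SchwartzMap

abbrev Spacetime (d : ℕ) := EuclideanSpace ℝ (Fin (d + 1))

/-- The d'Alembertian `□f = ∂_t² f − Σ_{j=1}^d ∂_{x_j}² f` as a continuous linear operator
on the Schwartz space `𝓢(ℝ^{1+d}, ℂ)`. -/
noncomputable def dAlembertian (d : ℕ) :
    𝓢(Spacetime d, ℂ) →L[ℂ] 𝓢(Spacetime d, ℂ) :=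
  (LineDeriv.lineDerivOpCLM ℂ 𝓢(Spacetime d, ℂ) (EuclideanSpace.single 0 1 : Spacetime d)).comp
      (LineDeriv.lineDerivOpCLM ℂ 𝓢(Spacetime d, ℂ) (EuclideanSpace.single 0 1 : Spacetime d))
    - ∑ j : Fin d,
      (LineDeriv.lineDerivOpCLM ℂ 𝓢(Spacetime d, ℂ) (EuclideanSpace.single j.succ 1 : Spacetime d)).comp
        (LineDeriv.lineDerivOpCLM ℂ 𝓢(Spacetime d, ℂ) (EuclideanSpace.single j.succ 1 : Spacetime d))

/-! ### Auxiliary lemmas on functions of temperate growth -/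

section TemperateGrowth

open Real
open scoped FourierTransform RealInnerProductSpace

variable {D E F G : Type*} [NormedAddCommGroup D] [NormedSpace ℝ D]
    [NormedAddCommGroup E] [NormedSpace ℝ E] [NormedAddCommGroup F] [NormedSpace ℝ F]
    [NormedAddCommGroup G] [NormedSpace ℝ G]

/-- Iterated derivative bound for a bilinear image, at all orders up to `n`. -/
lemma bilin_bound (B : E →L[ℝ] F →L[ℝ] G) {f : D → E} {g : D → F}
    (hf : ContDiff ℝ ((⊤ : ℕ∞) : WithTop ℕ∞) f) (hg : ContDiff ℝ ((⊤ : ℕ∞) : WithTop ℕ∞) g)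
    {n : ℕ} {kf kg : ℕ} {Cf Cg : ℝ} (hCf0 : 0 ≤ Cf) (hCg0 : 0 ≤ Cg)
    (hf' : ∀ i ≤ n, ∀ x, ‖iteratedFDeriv ℝ i f x‖ ≤ Cf * (1 + ‖x‖) ^ kf)
    (hg' : ∀ i ≤ n, ∀ x, ‖iteratedFDeriv ℝ i g x‖ ≤ Cg * (1 + ‖x‖) ^ kg) :
    ∀ i ≤ n, ∀ x, ‖iteratedFDeriv ℝ i (fun y => B (f y) (g y)) x‖ ≤
      ‖B‖ * 2 ^ n * (Cf * Cg) * (1 + ‖x‖) ^ (kf + kg) := by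
  intro i hi x
  have h := B.norm_iteratedFDeriv_le_of_bilinear hf hg x (n := i) (mod_cast le_top)
  refine h.trans ?_
  have h1 : ∑ j ∈ Finset.range (i + 1),
      (i.choose j : ℝ) * ‖iteratedFDeriv ℝ j f x‖ * ‖iteratedFDeriv ℝ (i - j) g x‖ ≤
      ∑ j ∈ Finset.range (i + 1),
      (i.choose j : ℝ) * (Cf * (Cg * (1 + ‖x‖) ^ (kf + kg))) := by
    refine Finset.sum_le_sum fun j hj => ?_
    rw [Finset.mem_range_succ_iff] at hj
    rw [mul_assoc]
    refine mul_le_mul_of_nonneg_left ?_ (by positivity)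
    have b1 := hf' j (hj.trans hi) x
    have b2 := hg' (i - j) ((Nat.sub_le i j).trans hi) x
    calc ‖iteratedFDeriv ℝ j f x‖ * ‖iteratedFDeriv ℝ (i - j) g x‖
        ≤ (Cf * (1 + ‖x‖) ^ kf) * (Cg * (1 + ‖x‖) ^ kg) :=
          mul_le_mul b1 b2 (norm_nonneg _) (by positivity)
      _ = Cf * (Cg * (1 + ‖x‖) ^ (kf + kg)) := by rw [pow_add]; ring
  have h2 : ∑ j ∈ Finset.range (i + 1), (i.choose j : ℝ) = 2 ^ i := by
    norm_cast
    exact Nat.sum_range_choose i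
  calc ‖B‖ * ∑ j ∈ Finset.range (i + 1),
      (i.choose j : ℝ) * ‖iteratedFDeriv ℝ j f x‖ * ‖iteratedFDeriv ℝ (i - j) g x‖
      ≤ ‖B‖ * ∑ j ∈ Finset.range (i + 1),
        (i.choose j : ℝ) * (Cf * (Cg * (1 + ‖x‖) ^ (kf + kg))) :=
        mul_le_mul_of_nonneg_left h1 (norm_nonneg B)
    _ = ‖B‖ * 2 ^ i * (Cf * Cg) * (1 + ‖x‖) ^ (kf + kg) := by
        rw [← Finset.sum_mul, h2]; ring
    _ ≤ ‖B‖ * 2 ^ n * (Cf * Cg) * (1 + ‖x‖) ^ (kf + kg) := by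
        have h2n : (2 : ℝ) ^ i ≤ 2 ^ n := pow_le_pow_right₀ one_le_two hi
        have hB := norm_nonneg B
        have hCfg := mul_nonneg hCf0 hCg0
        gcongr

lemma Function.HasTemperateGrowth.bilin (B : E →L[ℝ] F →L[ℝ] G) {f : D → E} {g : D → F}
    (hf : Function.HasTemperateGrowth f) (hg : Function.HasTemperateGrowth g) :
    Function.HasTemperateGrowth (fun x => B (f x) (g x)) := by
  refine ⟨(B.isBoundedBilinearMap.contDiff).comp (hf.1.prodMk hg.1), fun n => ?_⟩
  obtain ⟨kf, Cf, hCf0, hCf⟩ := hf.norm_iteratedFDeriv_le_uniform n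
  obtain ⟨kg, Cg, hCg0, hCg⟩ := hg.norm_iteratedFDeriv_le_uniform n
  exact ⟨kf + kg, ‖B‖ * 2 ^ n * (Cf * Cg),
    fun x => bilin_bound B hf.1 hg.1 hCf0 hCg0 (fun i hi => hCf i hi) (fun i hi => hCg i hi)
      n le_rfl x⟩

lemma htg_add {f g : E → F} (hf : Function.HasTemperateGrowth f)
    (hg : Function.HasTemperateGrowth g) : Function.HasTemperateGrowth (f + g) := by
  refine ⟨hf.1.add hg.1, fun n => ?_⟩
  obtain ⟨kf, Cf, hCf⟩ := hf.2 n
  obtain ⟨kg, Cg, hCg⟩ := hg.2 n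
  refine ⟨max kf kg, max Cf 0 + max Cg 0, fun x => ?_⟩
  have base : (1:ℝ) ≤ 1 + ‖x‖ := by linarith [norm_nonneg x]
  have h1 : iteratedFDeriv ℝ n (f + g) x = iteratedFDeriv ℝ n f x + iteratedFDeriv ℝ n g x :=
    iteratedFDeriv_add_apply (hf.1.contDiffAt.of_le (by exact_mod_cast le_top))
      (hg.1.contDiffAt.of_le (by exact_mod_cast le_top))
  rw [h1]
  calc ‖iteratedFDeriv ℝ n f x + iteratedFDeriv ℝ n g x‖
      ≤ ‖iteratedFDeriv ℝ n f x‖ + ‖iteratedFDeriv ℝ n g x‖ := norm_add_le _ _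
    _ ≤ Cf * (1 + ‖x‖) ^ kf + Cg * (1 + ‖x‖) ^ kg := add_le_add (hCf x) (hCg x)
    _ ≤ max Cf 0 * (1 + ‖x‖) ^ max kf kg + max Cg 0 * (1 + ‖x‖) ^ max kf kg := by
        gcongr <;> first
          | exact le_max_left _ _
          | exact base
          | exact le_max_right _ _
    _ = (max Cf 0 + max Cg 0) * (1 + ‖x‖) ^ max kf kg := by ring

lemma htg_clm_comp {f : E → F} (L : F →L[ℝ] G) (hf : Function.HasTemperateGrowth f) :
    Function.HasTemperateGrowth (fun x => L (f x)) := by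
  refine ⟨L.contDiff.comp hf.1, fun n => ?_⟩
  obtain ⟨k, C, hC⟩ := hf.2 n
  refine ⟨k, ‖L‖ * C, fun x => ?_⟩
  have h1 : iteratedFDeriv ℝ n (fun x => L (f x)) x =
      L.compContinuousMultilinearMap (iteratedFDeriv ℝ n f x) :=
    L.iteratedFDeriv_comp_left hf.1.contDiffAt (by exact_mod_cast le_top)
  rw [h1, mul_assoc]
  exact (L.norm_compContinuousMultilinearMap_le _).trans
    (mul_le_mul_of_nonneg_left (hC x) (norm_nonneg L))

lemma htg_sum {ι : Type*} (s : Finset ι) (f : ι → E → F)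
    (h : ∀ i ∈ s, Function.HasTemperateGrowth (f i)) :
    Function.HasTemperateGrowth (fun x => ∑ i ∈ s, f i x) := by
  classical
  induction s using Finset.cons_induction with
  | empty => simpa using Function.HasTemperateGrowth.const (0 : F)
  | cons i s hi ih =>
    simp only [Finset.sum_cons]
    exact htg_add (h i (Finset.mem_cons_self i s))
      (ih fun j hj => h j (Finset.mem_cons_of_mem hj))

lemma htg_inv {w : E → ℂ} (hw : Function.HasTemperateGrowth w) {δ : ℝ} (hδ : 0 < δ)
    (hbd : ∀ x, δ ≤ ‖w x‖) :
    Function.HasTemperateGrowth (fun x => (w x)⁻¹) := by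
  have hne : ∀ x, w x ≠ 0 := by
    intro x h
    have := hbd x
    rw [h, norm_zero] at this
    linarith
  set g : E → ℂ := fun x => (w x)⁻¹ with hgdef
  have hgsm : ContDiff ℝ ((⊤ : ℕ∞) : WithTop ℕ∞) g := hw.1.inv hne
  have hwdiff : Differentiable ℝ w := hw.1.differentiable (by simp)
  set B := (-(ContinuousLinearMap.lsmul ℝ ℂ) : ℂ →L[ℝ] (E →L[ℝ] ℂ) →L[ℝ] (E →L[ℝ] ℂ)) with hBdef
  have hB : fderiv ℝ g = fun x => B (g x * g x) (fderiv ℝ w x) := by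
    funext x
    have h1 : HasFDerivAt g
        ((-(ContinuousLinearMap.mulLeftRight ℝ ℂ (w x)⁻¹ (w x)⁻¹)).comp (fderiv ℝ w x)) x :=
      (hasFDerivAt_inv' (hne x)).comp x (hwdiff x).hasFDerivAt
    rw [h1.fderiv]
    ext v
    simp only [hBdef, hgdef, ContinuousLinearMap.comp_apply, ContinuousLinearMap.neg_apply,
      ContinuousLinearMap.mulLeftRight_apply, ContinuousLinearMap.lsmul_apply,
      ContinuousLinearMap.smul_apply, smul_eq_mul]
    ring
  suffices H : ∀ n : ℕ, ∃ (k : ℕ) (C : ℝ), 0 ≤ C ∧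
      ∀ i ≤ n, ∀ x, ‖iteratedFDeriv ℝ i g x‖ ≤ C * (1 + ‖x‖) ^ k by
    refine ⟨hgsm, fun n => ?_⟩
    obtain ⟨k, C, _, h⟩ := H n
    exact ⟨k, C, h n le_rfl⟩
  intro n
  induction n with
  | zero =>
    refine ⟨0, δ⁻¹, by positivity, ?_⟩
    intro i hi x
    obtain rfl : i = 0 := Nat.le_zero.mp hi
    rw [pow_zero, mul_one, norm_iteratedFDeriv_zero]
    rw [hgdef]
    rw [norm_inv]
    exact inv_anti₀ hδ (hbd x)
  | succ n ih =>
    obtain ⟨k, C, hC0, hP⟩ := ih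
    have hgg := bilin_bound (ContinuousLinearMap.mul ℝ ℂ) hgsm hgsm hC0 hC0 hP hP
    obtain ⟨kw, Cw, hCw0, hCw⟩ := hw.norm_iteratedFDeriv_le_uniform (n + 1)
    have hwd : ∀ i ≤ n, ∀ x, ‖iteratedFDeriv ℝ i (fderiv ℝ w) x‖ ≤ Cw * (1 + ‖x‖) ^ kw := by
      intro i hi x
      rw [norm_iteratedFDeriv_fderiv]
      exact hCw (i + 1) (by omega) x
    have houter := bilin_bound B (hgsm.mul hgsm) (hw.1.fderiv_right (mod_cast le_top))
      (by positivity) hCw0 hgg hwd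
    set Cgg := ‖ContinuousLinearMap.mul ℝ ℂ‖ * 2 ^ n * (C * C) with hCggdef
    set C1 := ‖B‖ * 2 ^ n * (Cgg * Cw) with hC1def
    refine ⟨k + k + kw, max C C1, le_trans hC0 (le_max_left _ _), ?_⟩
    intro i hi x
    have base : (1:ℝ) ≤ 1 + ‖x‖ := by linarith [norm_nonneg x]
    by_cases hin : i ≤ n
    · calc ‖iteratedFDeriv ℝ i g x‖ ≤ C * (1 + ‖x‖) ^ k := hP i hin x
        _ ≤ max C C1 * (1 + ‖x‖) ^ (k + k + kw) := by
            have e1 : C ≤ max C C1 := le_max_left _ _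
            have e2 : k ≤ k + k + kw := by omega
            gcongr
    · obtain rfl : i = n + 1 := by omega
      have hnorm : ‖iteratedFDeriv ℝ (n + 1) g x‖ = ‖iteratedFDeriv ℝ n (fderiv ℝ g) x‖ :=
        (norm_iteratedFDeriv_fderiv).symm
      rw [hnorm, hB]
      refine (houter n le_rfl x).trans ?_
      gcongr
      exact le_max_right _ _

end TemperateGrowth

/-! ### Fourier analysis of the d'Alembertian -/

section Fourier

open Real
open scoped FourierTransform RealInnerProductSpace

variable {d : ℕ}

lemma fourier_pderiv (v : Spacetime d) (f : 𝓢(Spacetime d, ℂ)) (ξ : Spacetime d) :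
    SchwartzMap.fourierTransformCLM ℂ (LineDeriv.lineDerivOpCLM ℂ 𝓢(Spacetime d, ℂ) v f) ξ =
      (2 * ↑π * I * ((⟪ξ, v⟫ : ℝ) : ℂ)) * SchwartzMap.fourierTransformCLM ℂ f ξ := by
  have ht : (fun x : Spacetime d => inner ℝ x v).HasTemperateGrowth :=
    ((innerSL ℝ).flip v).hasTemperateGrowth
  rw [SchwartzMap.fourierTransformCLM_apply, LineDeriv.lineDerivOpCLM_apply,
    SchwartzMap.fourier_lineDerivOp_eq, SchwartzMap.smul_apply,
    SchwartzMap.smulLeftCLM_apply_apply ht, ← SchwartzMap.fourierTransformCLM_apply ℂ]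
  simp only [smul_eq_mul, Complex.real_smul]
  ring

lemma schwartz_sum_apply {ι E F : Type*} [NormedAddCommGroup E] [NormedSpace ℝ E]
    [NormedAddCommGroup F] [NormedSpace ℝ F] (s : Finset ι) (f : ι → 𝓢(E, F)) (x : E) :
    (∑ i ∈ s, f i) x = ∑ i ∈ s, f i x := by
  classical
  induction s using Finset.cons_induction with
  | empty => simp
  | cons i s hi ih => rw [Finset.sum_cons, Finset.sum_cons, SchwartzMap.add_apply, ih]

/-- The symbol of the d'Alembertian (after Fourier transform). -/
noncomputable def symb (d : ℕ) (ξ : Spacetime d) : ℝ :=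
  4 * π ^ 2 * (∑ j : Fin d, ξ j.succ ^ 2) - 4 * π ^ 2 * ξ 0 ^ 2

lemma fourier_dAlembertian (φ : 𝓢(Spacetime d, ℂ)) (ξ : Spacetime d) :
    SchwartzMap.fourierTransformCLM ℂ ((dAlembertian d) φ) ξ =
      (symb d ξ : ℂ) * SchwartzMap.fourierTransformCLM ℂ φ ξ := by
  have hin : ∀ i : Fin (d + 1), (⟪ξ, (EuclideanSpace.single i (1:ℝ))⟫ : ℝ) = ξ i := by
    intro i
    rw [EuclideanSpace.inner_single_right]
    simp
  have key : ∀ i : Fin (d + 1),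
      SchwartzMap.fourierTransformCLM ℂ
        (((LineDeriv.lineDerivOpCLM ℂ 𝓢(Spacetime d, ℂ) (EuclideanSpace.single i 1 : Spacetime d)).comp
          (LineDeriv.lineDerivOpCLM ℂ 𝓢(Spacetime d, ℂ) (EuclideanSpace.single i 1 : Spacetime d))) φ) ξ
      = (2 * ↑π * I * ((ξ i : ℝ) : ℂ)) ^ 2 * SchwartzMap.fourierTransformCLM ℂ φ ξ := by
    intro i
    rw [ContinuousLinearMap.comp_apply, fourier_pderiv, fourier_pderiv, hin]
    ring
  rw [dAlembertian, ContinuousLinearMap.sub_apply, map_sub, ContinuousLinearMap.sum_apply,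
    map_sum, SchwartzMap.sub_apply, key, schwartz_sum_apply]
  have hsum : ∀ j : Fin d,
      SchwartzMap.fourierTransformCLM ℂ
        (((LineDeriv.lineDerivOpCLM ℂ 𝓢(Spacetime d, ℂ) (EuclideanSpace.single j.succ 1 : Spacetime d)).comp
          (LineDeriv.lineDerivOpCLM ℂ 𝓢(Spacetime d, ℂ) (EuclideanSpace.single j.succ 1 : Spacetime d))) φ) ξ
      = (2 * ↑π * I * ((ξ j.succ : ℝ) : ℂ)) ^ 2 * SchwartzMap.fourierTransformCLM ℂ φ ξ :=
    fun j => key j.succ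
  rw [Finset.sum_congr rfl (fun j _ => hsum j), ← Finset.sum_mul]
  have hscal : ((2 * ↑π * I * ((ξ 0 : ℝ) : ℂ)) ^ 2
      - ∑ j : Fin d, (2 * ↑π * I * ((ξ j.succ : ℝ) : ℂ)) ^ 2) = (symb d ξ : ℂ) := by
    have h1 : ∀ a : ℝ, (2 * ↑π * I * (a : ℂ)) ^ 2 = -(((4 * π ^ 2 * a ^ 2 : ℝ)) : ℂ) := by
      intro a
      push_cast
      rw [mul_pow, mul_pow, mul_pow, I_sq]
      ring
    rw [h1]
    rw [Finset.sum_congr rfl (fun j _ => h1 (ξ j.succ))]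
    rw [Finset.sum_neg_distrib, ← ofReal_sum]
    simp only [symb]
    push_cast [Finset.mul_sum]
    ring
  rw [← hscal]
  ring

/-- The symbol has temperate growth. -/
lemma htg_symb (d : ℕ) : Function.HasTemperateGrowth (symb d) := by
  have hcoord : ∀ i : Fin (d + 1),
      Function.HasTemperateGrowth (fun ξ : Spacetime d => ξ i) := by
    intro i
    exact (EuclideanSpace.proj (𝕜 := ℝ) i).hasTemperateGrowth
  have hsq : ∀ i : Fin (d + 1),
      Function.HasTemperateGrowth (fun ξ : Spacetime d => ξ i ^ 2) := by
    intro i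
    have := (hcoord i).bilin (ContinuousLinearMap.mul ℝ ℝ) (hcoord i)
    have heq : (fun ξ : Spacetime d => (ContinuousLinearMap.mul ℝ ℝ) (ξ i) (ξ i))
        = fun ξ : Spacetime d => ξ i ^ 2 := by
      funext ξ; simp [sq]
    rwa [heq] at this
  have hsum : Function.HasTemperateGrowth
      (fun ξ : Spacetime d => ∑ j : Fin d, ξ j.succ ^ 2) :=
    htg_sum Finset.univ (fun (j : Fin d) (ξ : Spacetime d) => ξ j.succ ^ 2) (fun j _ => hsq j.succ)
  have ht1 := (Function.HasTemperateGrowth.const (4 * π ^ 2 : ℝ)).bilin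
    (ContinuousLinearMap.mul ℝ ℝ) hsum
  have ht2 := (Function.HasTemperateGrowth.const (-(4 * π ^ 2) : ℝ)).bilin
    (ContinuousLinearMap.mul ℝ ℝ) (hsq 0)
  have := htg_add ht1 ht2
  have heq : ((fun ξ : Spacetime d =>
        (ContinuousLinearMap.mul ℝ ℝ) (4 * π ^ 2) (∑ j : Fin d, ξ j.succ ^ 2)) +
      fun ξ : Spacetime d => (ContinuousLinearMap.mul ℝ ℝ) (-(4 * π ^ 2)) (ξ 0 ^ 2))
      = symb d := by
    funext ξ
    simp only [Pi.add_apply, ContinuousLinearMap.mul_apply', symb]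
    ring
  rwa [heq] at this

end Fourier

/-- If `Im λ ≠ 0`, the only tempered distribution `u` on `ℝ^{1+d}` with `□u = λu`
(in the sense of distributions) is `u = 0`. -/
theorem no_tempered_eigendistributions (d : ℕ) (hd : 1 ≤ d)
    (lam : ℂ) (hlam : lam.im ≠ 0)
    (u : 𝓢(Spacetime d, ℂ) →L[ℂ] ℂ)
    (hu : ∀ φ : 𝓢(Spacetime d, ℂ), u (dAlembertian d φ) = lam * u φ) :
    u = 0 := by
  have hδ : 0 < |lam.im| := abs_pos.mpr hlam
  set wfun : Spacetime d → ℂ := fun ξ => ((symb d ξ : ℝ) : ℂ) - lam with hwdef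
  have hw : Function.HasTemperateGrowth wfun := by
    have h1 := htg_clm_comp Complex.ofRealCLM (htg_symb d)
    have h2 := htg_add h1 (Function.HasTemperateGrowth.const (-lam))
    have heq : ((fun ξ : Spacetime d => Complex.ofRealCLM (symb d ξ)) +
        fun _ : Spacetime d => -lam) = wfun := by
      funext ξ
      simp [hwdef, sub_eq_add_neg]
    rwa [heq] at h2
  have hbd : ∀ ξ, |lam.im| ≤ ‖wfun ξ‖ := by
    intro ξ
    have him : (wfun ξ).im = -lam.im := by simp [hwdef]
    calc |lam.im| = |(wfun ξ).im| := by rw [him, abs_neg]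
      _ ≤ ‖wfun ξ‖ := Complex.abs_im_le_norm _
      _ = ‖wfun ξ‖ := rfl
  have hne : ∀ ξ, wfun ξ ≠ 0 := by
    intro ξ h
    have := hbd ξ
    rw [h, norm_zero] at this
    linarith
  have hg := htg_inv hw hδ hbd
  ext ψ
  set Fψ := SchwartzMap.fourierTransformCLM ℂ ψ with hFψdef
  set Mψ := SchwartzMap.bilinLeftCLM (ContinuousLinearMap.mul ℝ ℂ) hg Fψ with hMdef
  set φ := (FourierTransform.fourierCLE ℂ 𝓢(Spacetime d, ℂ)).symm Mψ with hφdef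
  have hCLE : ∀ f : 𝓢(Spacetime d, ℂ),
      FourierTransform.fourierCLE ℂ 𝓢(Spacetime d, ℂ) f = SchwartzMap.fourierTransformCLM ℂ f := fun _ => rfl
  have hFφ : SchwartzMap.fourierTransformCLM ℂ φ = Mψ := by
    rw [← hCLE, hφdef]
    exact (FourierTransform.fourierCLE ℂ 𝓢(Spacetime d, ℂ)).apply_symm_apply Mψ
  have key : dAlembertian d φ - lam • φ = ψ := by
    apply (FourierTransform.fourierCLE ℂ 𝓢(Spacetime d, ℂ)).injective
    apply SchwartzMap.ext
    intro ξ
    rw [map_sub, _root_.map_smul, hCLE, hCLE]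
    rw [SchwartzMap.sub_apply, SchwartzMap.smul_apply, fourier_dAlembertian, hFφ]
    have hM : Mψ ξ = Fψ ξ * (wfun ξ)⁻¹ := rfl
    rw [hM, hCLE]
    rw [← hFψdef]
    have : (symb d ξ : ℂ) - lam = wfun ξ := rfl
    rw [smul_eq_mul]
    calc (symb d ξ : ℂ) * (Fψ ξ * (wfun ξ)⁻¹) - lam * (Fψ ξ * (wfun ξ)⁻¹)
        = (wfun ξ * (wfun ξ)⁻¹) * Fψ ξ := by rw [← this]; ring
      _ = Fψ ξ := by rw [mul_inv_cancel₀ (hne ξ), one_mul]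
  have h2 := hu φ
  have h3 : u ψ = u (dAlembertian d φ) - lam * u φ := by
    rw [← key, map_sub, _root_.map_smul, smul_eq_mul]
  rw [ContinuousLinearMap.zero_apply, h3, h2]
  ring
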